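/- Let A = F[x_1, ..., x_n]/(x_1², ..., x_n²) over a field F of characteristic 0, let l = x_1 + ... + x_n, and let g = (1+x_1)(1+x_2)···(1+x_n). Then the matrix of the multiplication map ×g : A → A with respect to the basis of square-free monomials in reverse lexicographic order is the n-th Sierpinski matrix B_n. -/

import Mathlib

/-- The `n`-th Sierpinski matrix: `B 0 = (1)` and `B (n+1) = [[B n, B n], [0, B n]]`. -/
def sierpinski (F : Type*) [Zero F] [One F] : (n : ℕ) → Matrix (Fin (2 ^ n)) (Fin (2 ^ n)) F
  | 0 => 1
  | n + 1 =>
    Matrix.reindex (finSumFinEquiv.trans (finCongr (by rw [pow_succ, mul_two])))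
      (finSumFinEquiv.trans (finCongr (by rw [pow_succ, mul_two])))
      (Matrix.fromBlocks (sierpinski F n) (sierpinski F n) 0 (sierpinski F n))

/-- The quadratic monomial complete intersection `F[x_1,…,x_n]/(x_1²,…,x_n²)`. -/
def SquareFreeAlgebra (F : Type*) [Field F] (n : ℕ) :=
  MvPolynomial (Fin n) F ⧸
    Ideal.span (Set.range fun i : Fin n => (MvPolynomial.X i : MvPolynomial (Fin n) F) ^ 2)

noncomputable instance (F : Type*) [Field F] (n : ℕ) : CommRing (SquareFreeAlgebra F n) :=
  Ideal.Quotient.commRing _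

noncomputable instance (F : Type*) [Field F] (n : ℕ) : Algebra F (SquareFreeAlgebra F n) :=
  Ideal.Quotient.algebra F

noncomputable instance (F : Type*) [Field F] (n : ℕ) : Module F (SquareFreeAlgebra F n) :=
  Algebra.toModule

/-- The image of the variable `x i` in `F[x_1,…,x_n]/(x_1²,…,x_n²)`. -/
noncomputable def sfVar {F : Type*} [Field F] {n : ℕ} (i : Fin n) : SquareFreeAlgebra F n :=
  Ideal.Quotient.mk _ (MvPolynomial.X i)

/-- The square-free monomial indexed by `j : Fin (2^n)`: the product of the `x i` over
those `i` for which the `i`-th binary digit of `j` is `1`.  Listing these in the order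
`j = 0, 1, 2, …` is exactly the reverse lexicographic order
`1 < x_1 < x_2 < x_1x_2 < x_3 < ⋯`. -/
noncomputable def sfMonomial {F : Type*} [Field F] {n : ℕ} (j : Fin (2 ^ n)) :
    SquareFreeAlgebra F n :=
  ∏ i : Fin n, if (j : ℕ).testBit (i : ℕ) then sfVar i else 1

/-! ### Auxiliary lemmas -/

lemma aux_testBit_one (m : ℕ) : (1 : ℕ).testBit m = decide (m = 0) := by
  cases m with
  | zero => simp
  | succ m => simp [Nat.testBit_succ]

lemma aux_land_eq_iff (a b : ℕ) :
    a &&& b = a ↔ ∀ k, a.testBit k = true → b.testBit k = true := by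
  constructor
  · intro h k hk
    have h2 := congrArg (Nat.testBit · k) h
    simp only [Nat.testBit_land, hk, Bool.true_and] at h2
    exact h2
  · intro h
    apply Nat.eq_of_testBit_eq
    intro k
    rw [Nat.testBit_land]
    cases hk : a.testBit k
    · simp
    · simp [h k hk]

lemma aux_testBit_pow_add {n : ℕ} (j : ℕ) (hj : j < 2 ^ n) (k : ℕ) :
    (2 ^ n + j).testBit k = if k < n then j.testBit k else decide (k = n) := by
  have h := Nat.testBit_two_pow_mul_add 1 hj k
  rw [mul_one] at h
  rw [h]
  split
  · rfl
  · next hk =>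
    rw [aux_testBit_one, decide_eq_decide]
    omega

lemma aux_testBit_high {n : ℕ} (j : ℕ) (h1 : 2 ^ n ≤ j) (h2 : j < 2 ^ n + 2 ^ n) (k : ℕ) :
    j.testBit k = if k < n then (j - 2 ^ n).testBit k else decide (k = n) := by
  obtain ⟨j', rfl⟩ : ∃ j', j = 2 ^ n + j' := ⟨j - 2 ^ n, by omega⟩
  rw [Nat.add_sub_cancel_left]
  exact aux_testBit_pow_add j' (by omega) k

lemma aux_testBit_of_lt {a k n : ℕ} (ha : a < 2 ^ n) (hk : n ≤ k) : a.testBit k = false :=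
  Nat.testBit_lt_two_pow (lt_of_lt_of_le ha (Nat.pow_le_pow_right (by norm_num) hk))

lemma aux_symm_trans_apply {n : ℕ} (pf : 2 ^ n + 2 ^ n = 2 ^ (n + 1)) (i : Fin (2 ^ (n + 1))) :
    (finSumFinEquiv.trans (finCongr pf)).symm i =
      if h : (i : ℕ) < 2 ^ n then Sum.inl ⟨i, h⟩
      else Sum.inr ⟨(i : ℕ) - 2 ^ n, by have := i.isLt.trans_eq pf.symm; omega⟩ := by
  rw [Equiv.symm_apply_eq]
  split
  · apply Fin.ext
    simp
  · next h =>
    apply Fin.ext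
    simp
    omega

/-- Entry formula for the Sierpinski matrix. -/
lemma sierpinski_apply (F : Type*) [Zero F] [One F] :
    ∀ (n : ℕ) (i j : Fin (2 ^ n)),
      sierpinski F n i j = if (i : ℕ) &&& (j : ℕ) = (i : ℕ) then 1 else 0
  | 0, i, j => by
    have hij : i = j := by
      apply Fin.ext
      have h1 := i.isLt
      have h2 := j.isLt
      norm_num at h1 h2
      omega
    subst hij
    rw [show sierpinski F 0 = 1 from rfl, Matrix.one_apply_eq,
      if_pos ((aux_land_eq_iff _ _).mpr fun k hk => hk)]
  | n + 1, i, j => by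
    have pf : 2 ^ n + 2 ^ n = 2 ^ (n + 1) := by rw [pow_succ, mul_two]
    have hilt := i.isLt.trans_eq pf.symm
    have hjlt := j.isLt.trans_eq pf.symm
    rw [sierpinski]
    simp only [Matrix.reindex_apply, Matrix.submatrix_apply]
    rw [aux_symm_trans_apply pf i, aux_symm_trans_apply pf j]
    rcases Nat.lt_or_ge (i : ℕ) (2 ^ n) with hi | hi <;>
      rcases Nat.lt_or_ge (j : ℕ) (2 ^ n) with hj | hj
    · rw [dif_pos hi, dif_pos hj, Matrix.fromBlocks_apply₁₁, sierpinski_apply F n]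
    · rw [dif_pos hi, dif_neg (not_lt.mpr hj), Matrix.fromBlocks_apply₁₂, sierpinski_apply F n]
      congr 1
      simp only [eq_iff_iff]
      rw [aux_land_eq_iff, aux_land_eq_iff]
      constructor
      · intro h k hk
        have hkn : k < n := by
          by_contra hc
          rw [aux_testBit_of_lt hi (not_lt.mp hc)] at hk
          exact absurd hk (by simp)
        rw [aux_testBit_high _ hj hjlt, if_pos hkn]
        exact h k hk
      · intro h k hk
        have hkn : k < n := by
          by_contra hc
          rw [aux_testBit_of_lt hi (not_lt.mp hc)] at hk
          exact absurd hk (by simp)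
        have h2 := h k hk
        rwa [aux_testBit_high _ hj hjlt, if_pos hkn] at h2
    · rw [dif_neg (not_lt.mpr hi), dif_pos hj, Matrix.fromBlocks_apply₂₁]
      rw [if_neg, Matrix.zero_apply]
      intro hc
      rw [aux_land_eq_iff] at hc
      have h1 : (i : ℕ).testBit n = true := by
        rw [aux_testBit_high _ hi hilt, if_neg (lt_irrefl n)]
        simp
      have h2 := hc n h1
      rw [aux_testBit_of_lt hj (le_refl n)] at h2
      exact absurd h2 (by simp)
    · rw [dif_neg (not_lt.mpr hi), dif_neg (not_lt.mpr hj), Matrix.fromBlocks_apply₂₂,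
        sierpinski_apply F n]
      congr 1
      simp only [eq_iff_iff]
      rw [aux_land_eq_iff, aux_land_eq_iff]
      constructor
      · intro h k hk
        rw [aux_testBit_high _ hi hilt] at hk
        rw [aux_testBit_high _ hj hjlt]
        rcases Nat.lt_or_ge k n with hkn | hkn
        · rw [if_pos hkn] at hk ⊢
          exact h k hk
        · rw [if_neg (not_lt.mpr hkn)] at hk ⊢
          exact hk
      · intro h k hk
        rcases Nat.lt_or_ge k n with hkn | hkn
        · have h2 := h k (by rw [aux_testBit_high _ hi hilt, if_pos hkn]; exact hk)
          rwa [aux_testBit_high _ hj hjlt, if_pos hkn] at h2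
        · rw [aux_testBit_of_lt (show (i : ℕ) - 2 ^ n < 2 ^ n by omega) hkn] at hk
          exact absurd hk (by simp)

lemma sfVar_mul_self {F : Type*} [Field F] {n : ℕ} (k : Fin n) :
    sfVar (F := F) k * sfVar k = 0 := by
  show Ideal.Quotient.mk _ (MvPolynomial.X k) * Ideal.Quotient.mk _ (MvPolynomial.X k) = 0
  have h : Ideal.Quotient.mk (Ideal.span (Set.range fun i : Fin n =>
      (MvPolynomial.X i : MvPolynomial (Fin n) F) ^ 2)) (MvPolynomial.X k * MvPolynomial.X k) = 0 := by
    rw [← sq, Ideal.Quotient.eq_zero_iff_mem]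
    exact Ideal.subset_span ⟨k, rfl⟩
  exact (map_mul _ _ _).symm.trans h

/-- In `A = F[x_1,…,x_n]/(x_1²,…,x_n²)` with basis the square-free monomials in reverse
lexicographic order, the matrix of multiplication by `g = (1+x_1)⋯(1+x_n)` is the `n`-th
Sierpinski matrix: the row of `g ⬝ (basis element i)` is row `i` of `B n`. -/
theorem sierpinski_is_matrix_of_mul_general_element
    {F : Type*} [Field F] [CharZero F] (n : ℕ)
    (g : SquareFreeAlgebra F n) (hg : g = ∏ i : Fin n, (1 + sfVar i)) :
    ∀ i : Fin (2 ^ n),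
      g * sfMonomial i = ∑ j : Fin (2 ^ n), sierpinski F n i j • sfMonomial j := by
  intro i
  classical
  set e : (Fin n → Fin 2) ≃ Fin (2 ^ n) := finFunctionFinEquiv with he
  -- the key testBit description of `e f`
  have hbit : ∀ (f : Fin n → Fin 2) (k : Fin n),
      ((e f : ℕ)).testBit (k : ℕ) = decide (f k = 1) := by
    intro f k
    have h1 : (e.symm (e f)) k = f k := by rw [Equiv.symm_apply_apply]
    have h2 : ((e f : ℕ)) / 2 ^ (k : ℕ) % 2 = ((f k : ℕ)) := by
      conv_rhs => rw [← h1]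
      rfl
    rw [Nat.testBit_eq_decide_div_mod_eq, h2]
    simp [Fin.ext_iff]
  -- LHS computation
  have lhs : g * sfMonomial i
      = ∏ k : Fin n, (if (i : ℕ).testBit (k : ℕ) then sfVar (F := F) k else 1 + sfVar k) := by
    rw [hg, sfMonomial, ← Finset.prod_mul_distrib]
    refine Finset.prod_congr rfl fun k _ => ?_
    split
    · rw [add_mul, one_mul, sfVar_mul_self, add_zero]
    · rw [mul_one]
  set c : Fin n → Fin 2 → SquareFreeAlgebra F n := fun k b =>
    if b = 1 then sfVar k else (if (i : ℕ).testBit (k : ℕ) then 0 else 1) with hc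
  have hfac : ∀ k : Fin n,
      (if (i : ℕ).testBit (k : ℕ) then sfVar (F := F) k else 1 + sfVar k) = ∑ b : Fin 2, c k b := by
    intro k
    rw [Fin.sum_univ_two]
    have h0 : c k 0 = if (i : ℕ).testBit (k : ℕ) then 0 else 1 := by simp [hc]
    have h1 : c k 1 = sfVar k := by simp [hc]
    rw [h0, h1]
    split
    · rw [zero_add]
    · rw [add_comm]
  rw [lhs]
  rw [Finset.prod_congr rfl fun k _ => hfac k, Finset.prod_univ_sum, Fintype.piFinset_univ]
  rw [← Equiv.sum_comp e (fun j => sierpinski F n i j • sfMonomial j)]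
  refine Finset.sum_congr rfl fun f _ => ?_
  rw [sierpinski_apply]
  -- key condition equivalence
  have hcond : ((i : ℕ) &&& ((e f : ℕ)) = (i : ℕ))
      ↔ ∀ k : Fin n, (i : ℕ).testBit (k : ℕ) = true → f k = 1 := by
    rw [aux_land_eq_iff]
    constructor
    · intro h k hk
      have := h (k : ℕ) hk
      rw [hbit] at this
      exact of_decide_eq_true this
    · intro h k hk
      have hkn : k < n := by
        by_contra hc2
        rw [aux_testBit_of_lt i.isLt (not_lt.mp hc2)] at hk
        exact absurd hk (by simp)
      have := h ⟨k, hkn⟩ hk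
      rw [hbit f ⟨k, hkn⟩]
      simpa using this
  by_cases hco : ∀ k : Fin n, (i : ℕ).testBit (k : ℕ) = true → f k = 1
  · rw [if_pos (hcond.mpr hco), one_smul, sfMonomial]
    refine Finset.prod_congr rfl fun k _ => ?_
    rw [hbit f k]
    simp only [hc]
    by_cases hfk : f k = 1
    · simp [hfk]
    · have hbk : (i : ℕ).testBit (k : ℕ) = false := by
        by_contra hcc
        exact hfk (hco k (by simpa using hcc))
      simp [hfk, hbk]
  · rw [if_neg (fun hcc => hco (hcond.mp hcc)), zero_smul]
    push_neg at hco
    obtain ⟨k, hk1, hk2⟩ := hco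
    refine Finset.prod_eq_zero (Finset.mem_univ k) ?_
    simp only [hc]
    rw [if_neg hk2, if_pos hk1]
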